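/- Let k₁, k₂ ∈ ℕ, k₃ ∈ ℕ with k₃ ≥ 1, suppose ω² = (4π²/(εμ))·(k₁²/l₁² + k₂²/l₂² + k₃²/(4(l₃⁺)²)), define w : ℝ³ → ℝ by w(x) = cos(2πk₁x₁/l₁)·cos(2πk₂x₂/l₂)·sin(πk₃x₃/l₃⁺), and set H := (−∂₃w, 0, ∂₁w) and E := (−iωε)⁻¹·(∂₁∂₂w, −∂₁²w − ∂₃²w, ∂₂∂₃w). Then curl E = iωμ·H and curl H = −iωε·E hold at every point of ℝ³, the components E₁ and E₂ vanish at every point with x₃ = 0 or x₃ = l₃⁺, but H₁(0,0,0) = −πk₃/l₃⁺ ≠ 0; in particular H₁ does not vanish identically on the plane {x₃ = 0}. -/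

import Mathlib

open Real Complex Filter Topology

/-- Partial derivative in the first coordinate. -/
noncomputable def pd1 {F : Type*} [NormedAddCommGroup F] [NormedSpace ℝ F]
    (f : ℝ × ℝ × ℝ → F) (x : ℝ × ℝ × ℝ) : F :=
  deriv (fun t => f (t, x.2.1, x.2.2)) x.1

/-- Partial derivative in the second coordinate. -/
noncomputable def pd2 {F : Type*} [NormedAddCommGroup F] [NormedSpace ℝ F]
    (f : ℝ × ℝ × ℝ → F) (x : ℝ × ℝ × ℝ) : F :=
  deriv (fun t => f (x.1, t, x.2.2)) x.2.1

/-- Partial derivative in the third coordinate. -/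
noncomputable def pd3 {F : Type*} [NormedAddCommGroup F] [NormedSpace ℝ F]
    (f : ℝ × ℝ × ℝ → F) (x : ℝ × ℝ × ℝ) : F :=
  deriv (fun t => f (x.1, x.2.1, t)) x.2.2

/-- Curl of a complex vector field on ℝ³. -/
noncomputable def curl3 (F : ℝ × ℝ × ℝ → ℂ × ℂ × ℂ) (x : ℝ × ℝ × ℝ) : ℂ × ℂ × ℂ :=
  (pd2 (fun y => (F y).2.2) x - pd3 (fun y => (F y).2.1) x,
   pd3 (fun y => (F y).1) x - pd1 (fun y => (F y).2.2) x,
   pd1 (fun y => (F y).2.1) x - pd2 (fun y => (F y).1) x)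

/-- Divergence of a complex vector field on ℝ³. -/
noncomputable def div3 (F : ℝ × ℝ × ℝ → ℂ × ℂ × ℂ) (x : ℝ × ℝ × ℝ) : ℂ :=
  pd1 (fun y => (F y).1) x + pd2 (fun y => (F y).2.1) x + pd3 (fun y => (F y).2.2) x

/-- Laplacian of a scalar function on ℝ³. -/
noncomputable def lap {F : Type*} [NormedAddCommGroup F] [NormedSpace ℝ F]
    (f : ℝ × ℝ × ℝ → F) (x : ℝ × ℝ × ℝ) : F :=
  pd1 (pd1 f) x + pd2 (pd2 f) x + pd3 (pd3 f) x

/-- Gradient of a complex scalar function on ℝ³. -/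
noncomputable def grad3 (f : ℝ × ℝ × ℝ → ℂ) (x : ℝ × ℝ × ℝ) : ℂ × ℂ × ℂ :=
  (pd1 f x, pd2 f x, pd3 f x)

lemma hd_cos (a : ℝ) (t : ℝ) : HasDerivAt (fun s => Real.cos (a*s)) (-(a * Real.sin (a*t))) t := by
  have h := (Real.hasDerivAt_cos (a*t)).comp t ((hasDerivAt_id t).const_mul a)
  exact h.congr_deriv (by ring)

lemma hd_sin (a : ℝ) (t : ℝ) : HasDerivAt (fun s => Real.sin (a*s)) (a * Real.cos (a*t)) t := by
  have h := (Real.hasDerivAt_sin (a*t)).comp t ((hasDerivAt_id t).const_mul a)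
  exact h.congr_deriv (by ring)

lemma pd1_form (z : ℂ) (g₁ g₂ g₃ g₁' : ℝ → ℝ)
    (hg : ∀ t, HasDerivAt g₁ (g₁' t) t) (x : ℝ × ℝ × ℝ) :
    pd1 (fun y => z * ((g₁ y.1 * (g₂ y.2.1 * g₃ y.2.2) : ℝ) : ℂ)) x
      = z * ((g₁' x.1 * (g₂ x.2.1 * g₃ x.2.2) : ℝ) : ℂ) := by
  have h := (((hg x.1).mul_const (g₂ x.2.1 * g₃ x.2.2)).ofReal_comp).const_mul z
  exact h.deriv

lemma pd2_form (z : ℂ) (g₁ g₂ g₃ g₂' : ℝ → ℝ)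
    (hg : ∀ t, HasDerivAt g₂ (g₂' t) t) (x : ℝ × ℝ × ℝ) :
    pd2 (fun y => z * ((g₁ y.1 * (g₂ y.2.1 * g₃ y.2.2) : ℝ) : ℂ)) x
      = z * ((g₁ x.1 * (g₂' x.2.1 * g₃ x.2.2) : ℝ) : ℂ) := by
  have h := ((((hg x.2.1).mul_const (g₃ x.2.2)).const_mul (g₁ x.1)).ofReal_comp).const_mul z
  exact h.deriv

lemma pd3_form (z : ℂ) (g₁ g₂ g₃ g₃' : ℝ → ℝ)
    (hg : ∀ t, HasDerivAt g₃ (g₃' t) t) (x : ℝ × ℝ × ℝ) :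
    pd3 (fun y => z * ((g₁ y.1 * (g₂ y.2.1 * g₃ y.2.2) : ℝ) : ℂ)) x
      = z * ((g₁ x.1 * (g₂ x.2.1 * g₃' x.2.2) : ℝ) : ℂ) := by
  have h := ((((hg x.2.2).const_mul (g₂ x.2.1)).const_mul (g₁ x.1)).ofReal_comp).const_mul z
  exact h.deriv

set_option maxHeartbeats 1000000 in
/-- the full-reflection eigenfunction solves Maxwell's equations in the bulk
and satisfies `E₁ = E₂ = 0` on the interface and the top boundary, but `H₁` does not vanish
on the interface. -/
theorem stmt6 (l₁ l₂ l₃p l₃m ε μ ω : ℝ)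
    (hl₁ : 0 < l₁) (hl₂ : 0 < l₂) (hl₃p : 0 < l₃p) (hl₃m : 0 < l₃m)
    (hε : 0 < ε) (hμ : 0 < μ) (hω : 0 < ω)
    (k₁ k₂ k₃ : ℕ) (hk₃ : 1 ≤ k₃)
    (hω2 : ω ^ 2 = 4 * π ^ 2 / (ε * μ) * ((k₁ : ℝ) ^ 2 / l₁ ^ 2 + (k₂ : ℝ) ^ 2 / l₂ ^ 2
        + (k₃ : ℝ) ^ 2 / (4 * l₃p ^ 2)))
    (w : ℝ × ℝ × ℝ → ℂ)
    (hw : w = fun x => ((Real.cos (2 * π * (k₁ : ℝ) * x.1 / l₁) *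
        Real.cos (2 * π * (k₂ : ℝ) * x.2.1 / l₂) *
        Real.sin (π * (k₃ : ℝ) * x.2.2 / l₃p) : ℝ) : ℂ))
    (E H : ℝ × ℝ × ℝ → ℂ × ℂ × ℂ)
    (hH : H = fun x => (-(pd3 w x), 0, pd1 w x))
    (hE : E = fun x => (-(Complex.I * (ω : ℂ) * (ε : ℂ)))⁻¹ •
        ((pd1 (pd2 w) x, -(pd1 (pd1 w) x) - pd3 (pd3 w) x, pd2 (pd3 w) x) : ℂ × ℂ × ℂ)) :
    (∀ x : ℝ × ℝ × ℝ, curl3 E x = (Complex.I * (ω : ℂ) * (μ : ℂ)) • H x) ∧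
    (∀ x : ℝ × ℝ × ℝ, curl3 H x = (-(Complex.I * (ω : ℂ) * (ε : ℂ))) • E x) ∧
    (∀ x : ℝ × ℝ × ℝ, x.2.2 = 0 ∨ x.2.2 = l₃p → (E x).1 = 0 ∧ (E x).2.1 = 0) ∧
    ((H ((0, 0, 0) : ℝ × ℝ × ℝ)).1 = -((π * (k₃ : ℝ) / l₃p : ℝ) : ℂ) ∧
      (H ((0, 0, 0) : ℝ × ℝ × ℝ)).1 ≠ 0) ∧
    (∃ x : ℝ × ℝ × ℝ, x.2.2 = 0 ∧ (H x).1 ≠ 0) := by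
  set a : ℝ := 2 * π * (k₁ : ℝ) / l₁ with ha
  set b : ℝ := 2 * π * (k₂ : ℝ) / l₂ with hb
  set c : ℝ := π * (k₃ : ℝ) / l₃p with hc
  set K : ℂ := (-(Complex.I * (ω : ℂ) * (ε : ℂ)))⁻¹ with hK
  have hne : (-(Complex.I * (ω : ℂ) * (ε : ℂ))) ≠ 0 :=
    neg_ne_zero.mpr (mul_ne_zero (mul_ne_zero Complex.I_ne_zero
      (Complex.ofReal_ne_zero.mpr hω.ne')) (Complex.ofReal_ne_zero.mpr hε.ne'))
  have hk₃R : (0:ℝ) < (k₃ : ℝ) := by exact_mod_cast Nat.lt_of_lt_of_le Nat.zero_lt_one hk₃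
  have hc_pos : 0 < c := by
    rw [hc]; exact div_pos (mul_pos Real.pi_pos hk₃R) hl₃p
  have hsum : a ^ 2 + b ^ 2 + c ^ 2 = ω ^ 2 * (ε * μ) := by
    rw [ha, hb, hc, hω2]
    field_simp
    ring
  have hsumC : (a:ℂ) ^ 2 + (b:ℂ) ^ 2 + (c:ℂ) ^ 2 = (ω:ℂ) ^ 2 * ((ε:ℂ) * (μ:ℂ)) := by
    exact_mod_cast congrArg (fun r : ℝ => (r : ℂ)) hsum
  have hKmul : K * ((a:ℂ) ^ 2 + (b:ℂ) ^ 2 + (c:ℂ) ^ 2) = Complex.I * (ω : ℂ) * (μ : ℂ) := by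
    rw [hK, inv_mul_eq_iff_eq_mul₀ hne, hsumC]
    linear_combination ((ω:ℂ)^2 * (ε:ℂ) * (μ:ℂ)) * Complex.I_mul_I
  -- w in normalized form
  have hw' : w = fun y => (1:ℂ) * ((Real.cos (a * y.1) * (Real.cos (b * y.2.1) *
      Real.sin (c * y.2.2)) : ℝ) : ℂ) := by
    rw [hw]; funext y
    have e1 : 2 * π * (k₁ : ℝ) * y.1 / l₁ = a * y.1 := by rw [ha]; ring
    have e2 : 2 * π * (k₂ : ℝ) * y.2.1 / l₂ = b * y.2.1 := by rw [hb]; ring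
    have e3 : π * (k₃ : ℝ) * y.2.2 / l₃p = c * y.2.2 := by rw [hc]; ring
    rw [e1, e2, e3]
    simp only [Complex.ofReal_mul, Complex.ofReal_neg]; ring
  -- first derivatives
  have hw1 : pd1 w = fun x => (-(a:ℂ)) * ((Real.sin (a * x.1) * (Real.cos (b * x.2.1) *
      Real.sin (c * x.2.2)) : ℝ) : ℂ) := by
    funext x; rw [hw']
    exact (pd1_form 1 (fun t => Real.cos (a*t)) (fun t => Real.cos (b*t)) (fun t => Real.sin (c*t)) _ (hd_cos a) x).trans (by simp only [Complex.ofReal_mul, Complex.ofReal_neg]; ring)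
  have hw2 : pd2 w = fun x => (-(b:ℂ)) * ((Real.cos (a * x.1) * (Real.sin (b * x.2.1) *
      Real.sin (c * x.2.2)) : ℝ) : ℂ) := by
    funext x; rw [hw']
    exact (pd2_form 1 (fun t => Real.cos (a*t)) (fun t => Real.cos (b*t)) (fun t => Real.sin (c*t)) _ (hd_cos b) x).trans (by simp only [Complex.ofReal_mul, Complex.ofReal_neg]; ring)
  have hw3 : pd3 w = fun x => ((c:ℂ)) * ((Real.cos (a * x.1) * (Real.cos (b * x.2.1) *
      Real.cos (c * x.2.2)) : ℝ) : ℂ) := by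
    funext x; rw [hw']
    exact (pd3_form 1 (fun t => Real.cos (a*t)) (fun t => Real.cos (b*t)) (fun t => Real.sin (c*t)) _ (hd_sin c) x).trans (by simp only [Complex.ofReal_mul, Complex.ofReal_neg]; ring)
  -- second derivatives
  have hw12 : pd1 (pd2 w) = fun x => ((a:ℂ) * (b:ℂ)) * ((Real.sin (a * x.1) *
      (Real.sin (b * x.2.1) * Real.sin (c * x.2.2)) : ℝ) : ℂ) := by
    funext x; rw [hw2]
    exact (pd1_form (-(b:ℂ)) (fun t => Real.cos (a*t)) (fun t => Real.sin (b*t)) (fun t => Real.sin (c*t)) _ (hd_cos a) x).trans (by simp only [Complex.ofReal_mul, Complex.ofReal_neg]; ring)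
  have hw11 : pd1 (pd1 w) = fun x => (-((a:ℂ) ^ 2)) * ((Real.cos (a * x.1) *
      (Real.cos (b * x.2.1) * Real.sin (c * x.2.2)) : ℝ) : ℂ) := by
    funext x; rw [hw1]
    exact (pd1_form (-(a:ℂ)) (fun t => Real.sin (a*t)) (fun t => Real.cos (b*t)) (fun t => Real.sin (c*t)) _ (hd_sin a) x).trans (by simp only [Complex.ofReal_mul, Complex.ofReal_neg]; ring)
  have hw33 : pd3 (pd3 w) = fun x => (-((c:ℂ) ^ 2)) * ((Real.cos (a * x.1) *
      (Real.cos (b * x.2.1) * Real.sin (c * x.2.2)) : ℝ) : ℂ) := by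
    funext x; rw [hw3]
    exact (pd3_form ((c:ℂ)) (fun t => Real.cos (a*t)) (fun t => Real.cos (b*t)) (fun t => Real.cos (c*t)) _ (hd_cos c) x).trans (by simp only [Complex.ofReal_mul, Complex.ofReal_neg]; ring)
  have hw23 : pd2 (pd3 w) = fun x => (-((b:ℂ) * (c:ℂ))) * ((Real.cos (a * x.1) *
      (Real.sin (b * x.2.1) * Real.cos (c * x.2.2)) : ℝ) : ℂ) := by
    funext x; rw [hw3]
    exact (pd2_form ((c:ℂ)) (fun t => Real.cos (a*t)) (fun t => Real.cos (b*t)) (fun t => Real.cos (c*t)) _ (hd_cos b) x).trans (by simp only [Complex.ofReal_mul, Complex.ofReal_neg]; ring)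
  -- components of E and H as explicit functions
  have hE1 : (fun y => (E y).1) = fun x => (K * ((a:ℂ) * (b:ℂ))) * ((Real.sin (a * x.1) *
      (Real.sin (b * x.2.1) * Real.sin (c * x.2.2)) : ℝ) : ℂ) := by
    funext y
    simp only [hE, hw12, Prod.smul_fst, smul_eq_mul]
    ring
  have hE2 : (fun y => (E y).2.1) = fun x => (K * ((a:ℂ) ^ 2 + (c:ℂ) ^ 2)) *
      ((Real.cos (a * x.1) * (Real.cos (b * x.2.1) * Real.sin (c * x.2.2)) : ℝ) : ℂ) := by
    funext y
    simp only [hE, hw11, hw33, Prod.smul_snd, Prod.smul_fst, smul_eq_mul]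
    ring
  have hE3 : (fun y => (E y).2.2) = fun x => (K * (-((b:ℂ) * (c:ℂ)))) *
      ((Real.cos (a * x.1) * (Real.sin (b * x.2.1) * Real.cos (c * x.2.2)) : ℝ) : ℂ) := by
    funext y
    simp only [hE, hw23, Prod.smul_snd, smul_eq_mul]
    ring
  have hH1 : (fun y => (H y).1) = fun x => (-(c:ℂ)) * ((Real.cos (a * x.1) *
      (Real.cos (b * x.2.1) * Real.cos (c * x.2.2)) : ℝ) : ℂ) := by
    funext y
    simp only [hH, hw3]
    ring
  have hH2 : (fun y => (H y).2.1) = fun _ => (0 : ℂ) := by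
    funext y; simp only [hH]
  have hH3 : (fun y => (H y).2.2) = fun x => (-(a:ℂ)) * ((Real.sin (a * x.1) *
      (Real.cos (b * x.2.1) * Real.sin (c * x.2.2)) : ℝ) : ℂ) := by
    funext y
    simp only [hH, hw1]
  refine ⟨?_, ?_, ?_, ?_, ?_⟩
  · -- curl E = iωμ H
    intro x
    have p1 : pd2 (fun y => (E y).2.2) x = (K * (-((b:ℂ) * (c:ℂ)))) *
        ((Real.cos (a * x.1) * (b * Real.cos (b * x.2.1) * Real.cos (c * x.2.2)) : ℝ) : ℂ) := by
      rw [hE3]; exact pd2_form (K * (-((b:ℂ) * (c:ℂ)))) (fun t => Real.cos (a*t)) (fun t => Real.sin (b*t)) (fun t => Real.cos (c*t)) _ (hd_sin b) x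
    have p2 : pd3 (fun y => (E y).2.1) x = (K * ((a:ℂ) ^ 2 + (c:ℂ) ^ 2)) *
        ((Real.cos (a * x.1) * (Real.cos (b * x.2.1) * (c * Real.cos (c * x.2.2))) : ℝ) : ℂ) := by
      rw [hE2]; exact pd3_form (K * ((a:ℂ) ^ 2 + (c:ℂ) ^ 2)) (fun t => Real.cos (a*t)) (fun t => Real.cos (b*t)) (fun t => Real.sin (c*t)) _ (hd_sin c) x
    have p3 : pd3 (fun y => (E y).1) x = (K * ((a:ℂ) * (b:ℂ))) *
        ((Real.sin (a * x.1) * (Real.sin (b * x.2.1) * (c * Real.cos (c * x.2.2))) : ℝ) : ℂ) := by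
      rw [hE1]; exact pd3_form (K * ((a:ℂ) * (b:ℂ))) (fun t => Real.sin (a*t)) (fun t => Real.sin (b*t)) (fun t => Real.sin (c*t)) _ (hd_sin c) x
    have p4 : pd1 (fun y => (E y).2.2) x = (K * (-((b:ℂ) * (c:ℂ)))) *
        ((-(a * Real.sin (a * x.1)) * (Real.sin (b * x.2.1) * Real.cos (c * x.2.2)) : ℝ) : ℂ) := by
      rw [hE3]; exact pd1_form (K * (-((b:ℂ) * (c:ℂ)))) (fun t => Real.cos (a*t)) (fun t => Real.sin (b*t)) (fun t => Real.cos (c*t)) _ (hd_cos a) x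
    have p5 : pd1 (fun y => (E y).2.1) x = (K * ((a:ℂ) ^ 2 + (c:ℂ) ^ 2)) *
        ((-(a * Real.sin (a * x.1)) * (Real.cos (b * x.2.1) * Real.sin (c * x.2.2)) : ℝ) : ℂ) := by
      rw [hE2]; exact pd1_form (K * ((a:ℂ) ^ 2 + (c:ℂ) ^ 2)) (fun t => Real.cos (a*t)) (fun t => Real.cos (b*t)) (fun t => Real.sin (c*t)) _ (hd_cos a) x
    have p6 : pd2 (fun y => (E y).1) x = (K * ((a:ℂ) * (b:ℂ))) *
        ((Real.sin (a * x.1) * (b * Real.cos (b * x.2.1) * Real.sin (c * x.2.2)) : ℝ) : ℂ) := by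
      rw [hE1]; exact pd2_form (K * ((a:ℂ) * (b:ℂ))) (fun t => Real.sin (a*t)) (fun t => Real.sin (b*t)) (fun t => Real.sin (c*t)) _ (hd_sin b) x
    have hHx1 := congrFun hH1 x
    have hHx2 := congrFun hH2 x
    have hHx3 := congrFun hH3 x
    simp only [curl3]
    refine Prod.ext ?_ (Prod.ext ?_ ?_)
    · simp only [Prod.smul_fst, smul_eq_mul, p1, p2, hHx1]
      simp only [Complex.ofReal_mul, Complex.ofReal_neg]
      linear_combination (-(c:ℂ) * (Real.cos (a * x.1) : ℂ) * (Real.cos (b * x.2.1) : ℂ) *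
        (Real.cos (c * x.2.2) : ℂ)) * hKmul
    · simp only [Prod.smul_snd, Prod.smul_fst, smul_eq_mul, p3, p4, hHx2]
      simp only [Complex.ofReal_mul, Complex.ofReal_neg]
      ring
    · simp only [Prod.smul_snd, smul_eq_mul, p5, p6, hHx3]
      simp only [Complex.ofReal_mul, Complex.ofReal_neg]
      linear_combination (-(a:ℂ) * (Real.sin (a * x.1) : ℂ) * (Real.cos (b * x.2.1) : ℂ) *
        (Real.sin (c * x.2.2) : ℂ)) * hKmul
  · -- curl H = -iωε E
    intro x
    have q1 : pd2 (fun y => (H y).2.2) x = (-(a:ℂ)) *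
        ((Real.sin (a * x.1) * (-(b * Real.sin (b * x.2.1)) * Real.sin (c * x.2.2)) : ℝ) : ℂ) := by
      rw [hH3]; exact pd2_form (-(a:ℂ)) (fun t => Real.sin (a*t)) (fun t => Real.cos (b*t)) (fun t => Real.sin (c*t)) _ (hd_cos b) x
    have q2 : pd3 (fun y => (H y).2.1) x = 0 := by
      rw [hH2]; simp [pd3]
    have q3 : pd3 (fun y => (H y).1) x = (-(c:ℂ)) *
        ((Real.cos (a * x.1) * (Real.cos (b * x.2.1) * (-(c * Real.sin (c * x.2.2)))) : ℝ) : ℂ) := by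
      rw [hH1]; exact pd3_form (-(c:ℂ)) (fun t => Real.cos (a*t)) (fun t => Real.cos (b*t)) (fun t => Real.cos (c*t)) _ (hd_cos c) x
    have q4 : pd1 (fun y => (H y).2.2) x = (-(a:ℂ)) *
        ((a * Real.cos (a * x.1) * (Real.cos (b * x.2.1) * Real.sin (c * x.2.2)) : ℝ) : ℂ) := by
      rw [hH3]; exact pd1_form (-(a:ℂ)) (fun t => Real.sin (a*t)) (fun t => Real.cos (b*t)) (fun t => Real.sin (c*t)) _ (hd_sin a) x
    have q5 : pd1 (fun y => (H y).2.1) x = 0 := by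
      rw [hH2]; simp [pd1]
    have q6 : pd2 (fun y => (H y).1) x = (-(c:ℂ)) *
        ((Real.cos (a * x.1) * (-(b * Real.sin (b * x.2.1)) * Real.cos (c * x.2.2)) : ℝ) : ℂ) := by
      rw [hH1]; exact pd2_form (-(c:ℂ)) (fun t => Real.cos (a*t)) (fun t => Real.cos (b*t)) (fun t => Real.cos (c*t)) _ (hd_cos b) x
    have hrhs : (-(Complex.I * (ω : ℂ) * (ε : ℂ))) • E x =
        (pd1 (pd2 w) x, -(pd1 (pd1 w) x) - pd3 (pd3 w) x, pd2 (pd3 w) x) := by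
      simp only [hE]
      rw [smul_smul, mul_inv_cancel₀ hne, one_smul]
    rw [hrhs]
    simp only [curl3, hw12, hw11, hw33, hw23]
    refine Prod.ext ?_ (Prod.ext ?_ ?_)
    · simp only [q1, q2]
      simp only [Complex.ofReal_mul, Complex.ofReal_neg]; ring
    · simp only [q3, q4]
      simp only [Complex.ofReal_mul, Complex.ofReal_neg]; ring
    · simp only [q5, q6]
      simp only [Complex.ofReal_mul, Complex.ofReal_neg]; ring
  · -- boundary conditions on E₁, E₂
    intro x hx
    have hs : Real.sin (c * x.2.2) = 0 := by
      rcases hx with h | h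
      · rw [h, mul_zero, Real.sin_zero]
      · have : c * x.2.2 = (k₃ : ℝ) * π := by rw [h, hc]; field_simp
        rw [this, Real.sin_nat_mul_pi]
    constructor
    · rw [congrFun hE1 x, hs]
      simp
    · rw [congrFun hE2 x, hs]
      simp
  · -- H₁ at origin
    have h0 : (H ((0,0,0) : ℝ × ℝ × ℝ)).1 = -((π * (k₃ : ℝ) / l₃p : ℝ) : ℂ) := by
      rw [congrFun hH1 ((0,0,0) : ℝ × ℝ × ℝ)]
      simp [hc]
    refine ⟨h0, ?_⟩
    rw [h0]
    simpa using (ne_of_gt (show (0:ℝ) < π * (k₃ : ℝ) / l₃p from hc ▸ hc_pos))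
  · -- existence
    have h0 : (H ((0,0,0) : ℝ × ℝ × ℝ)).1 = -((π * (k₃ : ℝ) / l₃p : ℝ) : ℂ) := by
      rw [congrFun hH1 ((0,0,0) : ℝ × ℝ × ℝ)]
      simp [hc]
    refine ⟨((0,0,0) : ℝ × ℝ × ℝ), rfl, ?_⟩
    rw [h0]
    simpa using (ne_of_gt (show (0:ℝ) < π * (k₃ : ℝ) / l₃p from hc ▸ hc_pos))
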